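/- arXiv:0908.1757 — 2 statements merged into one kernel-verified Lean document; each statement's English description precedes it below -/
import Mathlib

section
/- Let E be a unital, not necessarily commutative, ring and let Q, P ∈ E. Set p := [[1, 0],[0, 0]] ∈ M₂(E) and e := H · p · G. Then e is an idempotent: e·e = e. Moreover, if I is a two-sided ideal of E such that 1−Q·P ∈ I and 1−P·Q ∈ I, then every entry of the matrix e − p lies in I. -/
/-- With `G`, `H` as in the construction of the index morphism and
`p = [[1,0],[0,0]]`, the element `e = H · p · G` is an idempotent of `M₂(E)`;
moreover if `I` is a two-sided ideal containing `1 − QP` and `1 − PQ`, then every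
entry of `e − p` lies in `I`. -/
theorem stmt3 (E : Type*) [Ring E] (Q P : E)
    (G H p e : Matrix (Fin 2) (Fin 2) E)
    (hG : G = !![Q, 1 - Q * P; P * Q - 1, P + P * (1 - Q * P)])
    (hH : H = !![P + P * (1 - Q * P), P * Q - 1; 1 - Q * P, Q])
    (hp : p = !![(1 : E), 0; 0, 0])
    (he : e = H * p * G) :
    e * e = e ∧
    ∀ (I : TwoSidedIdeal E), 1 - Q * P ∈ I → 1 - P * Q ∈ I →
      ∀ i j, (e - p) i j ∈ I := by
  subst hG hH hp he
  constructor
  · ext i j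
    fin_cases i <;> fin_cases j <;>
      simp [Matrix.mul_apply, Fin.sum_univ_succ] <;> noncomm_ring
  · intro I hA hB i j
    fin_cases i <;> fin_cases j <;>
      simp [Matrix.mul_apply, Fin.sum_univ_succ]
    · have h1 : (P + P * (1 - Q * P)) * Q - 1 =
          -(1 - P * Q) + P * ((1 - Q * P) * Q) := by noncomm_ring
      rw [h1]
      exact I.add_mem (I.neg_mem hB) (I.mul_mem_left _ _ (I.mul_mem_right _ _ hA))
    · exact I.mul_mem_left _ _ hA
    · exact I.mul_mem_right _ _ hA
    · exact I.mul_mem_left _ _ hA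
end

section
/- Let R be a unital, not necessarily commutative, ring, let a, b ∈ R, and let n be a natural number. In M₂(R) set F := [[0, 1],[1, 0]] and f := [[a, 0],[0, b]]. Then (F·f − f·F)^{2n} = (−1)ⁿ · [[(a−b)^{2n}, 0],[0, (a−b)^{2n}]], and F·(F·f − f·F)^{2n+1} = (−1)ⁿ · [[(a−b)^{2n+1}, 0],[0, −(a−b)^{2n+1}]]. -/
lemma stmt15_aux (R : Type*) [Ring R] (a b : R) (n : ℕ) :
    (!![(0:R), b - a; a - b, 0]) ^ (2 * n)
      = !![(-1 : R) ^ n * (a - b) ^ (2 * n), 0;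
           0, (-1 : R) ^ n * (a - b) ^ (2 * n)] := by
  induction n with
  | zero => simp [Matrix.one_fin_two]
  | succ n ih =>
    have h : 2 * (n + 1) = 2 * n + 1 + 1 := by ring
    rw [h, pow_succ, pow_succ, ih, Matrix.mul_fin_two, Matrix.mul_fin_two]
    ext i j; fin_cases i <;> fin_cases j <;>
      simp [pow_succ, mul_sub, sub_mul, mul_assoc] <;> noncomm_ring

/-- In `M₂(R)` with `F = [[0,1],[1,0]]` and `f = diag(a, b)`,
the powers of the commutator `[F, f]` satisfy
`([F,f])^{2n} = (−1)ⁿ diag((a−b)^{2n}, (a−b)^{2n})` and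
`F·([F,f])^{2n+1} = (−1)ⁿ diag((a−b)^{2n+1}, −(a−b)^{2n+1})`. -/
theorem stmt15 (R : Type*) [Ring R] (a b : R) (n : ℕ)
    (F f : Matrix (Fin 2) (Fin 2) R)
    (hF : F = !![(0 : R), 1; 1, 0]) (hf : f = !![a, 0; 0, b]) :
    (F * f - f * F) ^ (2 * n)
      = !![(-1 : R) ^ n * (a - b) ^ (2 * n), 0;
           0, (-1 : R) ^ n * (a - b) ^ (2 * n)] ∧
    F * (F * f - f * F) ^ (2 * n + 1)
      = !![(-1 : R) ^ n * (a - b) ^ (2 * n + 1), 0;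
           0, -((-1 : R) ^ n * (a - b) ^ (2 * n + 1))] := by
  subst hF hf
  have hC : (!![(0:R), 1; 1, 0] * !![a, 0; 0, b] - !![a, 0; 0, b] * !![(0:R), 1; 1, 0])
      = !![(0:R), b - a; a - b, 0] := by
    rw [Matrix.mul_fin_two, Matrix.mul_fin_two]
    ext i j; fin_cases i <;> fin_cases j <;> simp
  rw [hC]
  refine ⟨stmt15_aux R a b n, ?_⟩
  rw [pow_succ, stmt15_aux R a b n, Matrix.mul_fin_two, Matrix.mul_fin_two]
  ext i j; fin_cases i <;> fin_cases j <;>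
    simp [pow_succ, mul_assoc, mul_sub, neg_mul]
end
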